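/- Fix z₁ = x₁ + iy₁ ∈ ℍ and t ∈ (−π, π) \ {0}. For R > 0 let w' = x' + iy' be the intersection point (with negative real part when t > 0) of the geodesic through i making angle t with the vertical geodesic through i, and the hyperbolic circle of center z₁ and radius R; let Q(z₁, t, R) = d(i, w'). Then, with β = |z₁|² + 1, e^{Q(z₁,t,R)} = 2y₁ e^R / (β − (β − 2) cos(t) + 2x₁ sin(t)) + O(1) as R → ∞, uniformly in t, where the implied constant depends on z₁. -/

import Mathlib

noncomputable section

open UpperHalfPlane Complex Real

private lemma cosh_dist_reim (z w : ℍ) : Real.cosh (dist z w) =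
    1 + ((z.re - w.re) ^ 2 + (z.im - w.im) ^ 2) / (2 * z.im * w.im) := by
  rw [UpperHalfPlane.cosh_dist, Complex.dist_eq, Complex.sq_norm, Complex.normSq_apply]
  simp [UpperHalfPlane.coe_re, UpperHalfPlane.coe_im]
  ring_nf

private lemma aux_pos_of_neg (t x : ℝ) (h : t * x < 0) (ht : t < 0) : 0 < x := by
  by_contra hc
  push_neg at hc
  nlinarith [mul_nonneg (by linarith : (0:ℝ) ≤ -t) (by linarith : (0:ℝ) ≤ -x)]

private lemma aux_neg_of_pos (t x : ℝ) (h : t * x < 0) (ht : 0 < t) : x < 0 := by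
  by_contra hc
  push_neg at hc
  nlinarith [mul_nonneg ht.le hc]

private lemma aux_sign_contra (s x ys : ℝ) (h : s * ys = x) (hys : 0 ≤ ys)
    (hsx : s * x < 0) : False := by
  have h2 : s * x = s * s * ys := by rw [← h]; ring
  nlinarith [mul_nonneg (mul_self_nonneg s) hys]

private lemma aux_Dpos (β y₁ D F : ℝ) (hy : 0 < y₁) (hβ : 1 ≤ β)
    (hid : 2 * β * D = D ^ 2 + F ^ 2 + 4 * y₁ ^ 2) : 0 < D := by
  nlinarith [sq_nonneg D, sq_nonneg F]

private lemma aux_Dlb (β y₁ D F : ℝ)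
    (hid : 2 * β * D = D ^ 2 + F ^ 2 + 4 * y₁ ^ 2) : 2 * y₁ ^ 2 ≤ β * D := by
  nlinarith [sq_nonneg D, sq_nonneg F]

private lemma aux_Eub (β c s x₁ E : ℝ) (hβ : 1 ≤ β) (hc1 : -1 ≤ c) (hc2 : c ≤ 1)
    (hs1 : -1 ≤ s) (hs2 : s ≤ 1) (hE : E = β + (β - 2) * c - 2 * x₁ * s) :
    E ≤ 2 * β + 2 * |x₁| := by
  have hxs : -(2 * x₁ * s) ≤ 2 * |x₁| := by
    rcases abs_cases x₁ with ⟨h, h'⟩ | ⟨h, h'⟩ <;> nlinarith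
  have hbc : (β - 2) * c ≤ β := by
    rcases le_or_gt 2 β with h2 | h2
    · nlinarith
    · nlinarith
  linarith [hE]

private lemma aux_beta (a b : ℝ) : (1:ℝ) ≤ a ^ 2 + b ^ 2 + 1 := by
  nlinarith [sq_nonneg a, sq_nonneg b]

private lemma aux_absb (a b y₁ E M : ℝ) (ha0 : 0 < a) (ha : a ≤ 1) (hb0 : 0 < b)
    (hb : b ≤ 1) (hE0 : 0 ≤ E) (hEM : E ≤ M) (hy : 0 < y₁) :
    |2 * y₁ * a - b * E| ≤ 2 * y₁ + M := by
  rw [abs_le]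
  constructor
  · nlinarith [mul_nonneg ha0.le hy.le, mul_nonneg hb0.le hE0]
  · nlinarith [mul_nonneg ha0.le hy.le, mul_nonneg hb0.le hE0]

private lemma aux_final (N β D y₁ : ℝ) (hN : 0 ≤ N) (hD : 0 < D) (hy : 0 < y₁)
    (hDβ : 2 * y₁ ^ 2 ≤ β * D) : N / D ≤ N * β / (2 * y₁ ^ 2) := by
  rw [div_le_div_iff₀ hD (by positivity)]
  nlinarith [mul_le_mul_of_nonneg_left hDβ hN]

set_option maxHeartbeats 1000000 in
/-- Let `w'` be the intersection point (the one with negative real part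
for `t > 0` and positive real part for `t < 0`) of the geodesic through `i` making angle
`t ∈ (−π,π) \ {0}` with the vertical geodesic through `i` (the Euclidean half-circle with
center `α = −cot t` and radius `δ = 1/|sin t|`) and the hyperbolic circle of center `z₁`
and radius `R`, and let `Q(z₁,t,R) = d(i,w')`.  Then, with `β = |z₁|² + 1`,
`e^{Q(z₁,t,R)} = 2y₁e^R/(β − (β−2)cos t + 2x₁ sin t) + O(1)` as `R → ∞`, uniformly in `t`. -/
theorem exp_dist_to_intersection (z1 : ℍ) :
    ∃ C R0 : ℝ, ∀ R : ℝ, R0 ≤ R → ∀ t : ℝ, t ∈ Set.Ioo (-π) π → t ≠ 0 → ∀ w' : ℍ,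
      -- `w'` lies on the Euclidean half-circle with center `−cot t`, radius `1/|sin t|`:
      (w'.re - (-(Real.cos t / Real.sin t))) ^ 2 + w'.im ^ 2 = (1 / |Real.sin t|) ^ 2 →
      -- `w'` lies on the hyperbolic circle of center `z₁` and radius `R`:
      dist z1 w' = R →
      -- `w'` is the intersection point with `sign(t) · Re w' < 0`:
      t * w'.re < 0 →
      |Real.exp (dist UpperHalfPlane.I w') -
          2 * z1.im * Real.exp R /
            ((‖(z1 : ℂ)‖ ^ 2 + 1) - ((‖(z1 : ℂ)‖ ^ 2 + 1) - 2) * Real.cos t +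
              2 * z1.re * Real.sin t)| ≤ C := by
  have habs : ‖(z1 : ℂ)‖ ^ 2 = z1.re ^ 2 + z1.im ^ 2 := by
    rw [Complex.sq_norm, Complex.normSq_apply]
    simp [UpperHalfPlane.coe_re, UpperHalfPlane.coe_im]
    ring
  refine ⟨(2 * z1.im + 2 * (z1.re ^ 2 + z1.im ^ 2 + 1) + 2 * |z1.re|) *
      (z1.re ^ 2 + z1.im ^ 2 + 1) / (2 * z1.im ^ 2), 0, ?_⟩
  intro R hR t ht ht0 w' hcirc hdist hsign
  rw [habs]
  set x₁ := z1.re with hx₁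
  set y₁ := z1.im with hy₁def
  set x := w'.re with hxdef
  set y := w'.im with hydef
  set s := Real.sin t with hsdef
  set c := Real.cos t with hcdef
  set d := dist UpperHalfPlane.I w' with hddef
  have hy₁ : 0 < y₁ := z1.im_pos
  have hy : 0 < y := w'.im_pos
  have hs2 : s ^ 2 + c ^ 2 = 1 := Real.sin_sq_add_cos_sq t
  have hc1 : -1 ≤ c := Real.neg_one_le_cos t
  have hc2 : c ≤ 1 := Real.cos_le_one t
  have hs1 : -1 ≤ s := Real.neg_one_le_sin t
  have hs1' : s ≤ 1 := Real.sin_le_one t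
  -- sign facts
  have hsx : s * x < 0 := by
    rcases ht0.lt_or_gt with htneg | htpos
    · have hsneg : s < 0 := by
        have h1 : 0 < Real.sin (-t) :=
          Real.sin_pos_of_pos_of_lt_pi (by linarith) (by linarith [ht.1])
        rw [Real.sin_neg] at h1; rw [hsdef]; linarith
      exact mul_neg_of_neg_of_pos hsneg (aux_pos_of_neg t x hsign htneg)
    · have hspos : 0 < s := Real.sin_pos_of_pos_of_lt_pi htpos ht.2
      exact mul_neg_of_pos_of_neg hspos (aux_neg_of_pos t x hsign htpos)
  have hs : s ≠ 0 := by
    intro h; rw [h] at hsx; simp at hsx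
  -- cosh of dist to i
  have hcdI : Real.cosh d = 1 + ((0 - x) ^ 2 + (1 - y) ^ 2) / (2 * 1 * y) := by
    have h := cosh_dist_reim UpperHalfPlane.I w'
    rwa [UpperHalfPlane.I_re, UpperHalfPlane.I_im] at h
  -- cosh of dist to z1
  have hcz : Real.cosh R = 1 + ((x₁ - x) ^ 2 + (y₁ - y) ^ 2) / (2 * y₁ * y) := by
    rw [← hdist]; exact cosh_dist_reim z1 w'
  have hd0 : (0:ℝ) ≤ d := dist_nonneg
  clear_value d c s y x y₁ x₁
  clear hx₁ hy₁def hxdef hydef hsdef hcdef hddef habs hdist hsign ht ht0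
  set β : ℝ := x₁ ^ 2 + y₁ ^ 2 + 1 with hβ
  clear_value β
  -- normalized circle equation
  have hA : (s * x + c) ^ 2 + (s * y) ^ 2 = 1 := by
    have h := hcirc
    rw [div_pow, one_pow, _root_.sq_abs] at h
    field_simp at h
    linear_combination h
  have hcd' : 2 * y * Real.cosh d = x ^ 2 + y ^ 2 + 1 := by
    rw [hcdI]; field_simp; ring
  have hC2 : (2 * s) * (s * (y * Real.cosh d)) = (2 * s) * (s - c * x) := by
    linear_combination s ^ 2 * hcd' + hA - hs2
  have hC : s * (y * Real.cosh d) = s - c * x :=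
    mul_left_cancel₀ (mul_ne_zero two_ne_zero hs) hC2
  -- sinh of dist to i
  have hsinh : Real.cosh d ^ 2 = Real.sinh d ^ 2 + 1 := Real.cosh_sq d
  have hS2 : (s * (y * Real.sinh d)) * (s * (y * Real.sinh d)) = x * x := by
    linear_combination (-(s * y) ^ 2) * hsinh + (s * (y * Real.cosh d) + s - c * x) * hC - hA +
      (x ^ 2 + 1) * hs2
  have hSnn : 0 ≤ Real.sinh d := Real.sinh_nonneg_iff.mpr hd0
  have hS : s * (y * Real.sinh d) = -x := by
    rcases mul_self_eq_mul_self_iff.mp hS2 with h | h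
    · exact absurd h (fun h => aux_sign_contra s x (y * Real.sinh d) h
        (mul_nonneg hy.le hSnn) hsx)
    · exact h
  have hcz' : 2 * y₁ * y * Real.cosh R = (x₁ - x) ^ 2 + (y₁ - y) ^ 2 + 2 * y₁ * y := by
    rw [hcz]; field_simp; ring
  -- intermediate identity
  have hI : 2 * y₁ * (y * (s ^ 2 * Real.cosh R)) = s * (s * β - 2 * c * x - 2 * s * x₁ * x) := by
    linear_combination s ^ 2 * hcz' + hA - hs2 - s ^ 2 * hβ
  -- key identity, multiplied by y * s^2
  have hKeyM : 2 * y₁ * Real.cosh R * (y * s ^ 2) =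
      (β * Real.cosh d + (2 * x₁ * s - (β - 2) * c) * Real.sinh d) * (y * s ^ 2) := by
    linear_combination hI - (β * s) * hC - ((2 * x₁ * s - (β - 2) * c) * s) * hS
  have hys : y * s ^ 2 ≠ 0 := mul_ne_zero (ne_of_gt hy) (pow_ne_zero 2 hs)
  have hKey : 2 * y₁ * Real.cosh R =
      β * Real.cosh d + (2 * x₁ * s - (β - 2) * c) * Real.sinh d :=
    mul_right_cancel₀ hys hKeyM
  -- main identity in exponential form
  rw [Real.cosh_eq, Real.cosh_eq, Real.sinh_eq] at hKey
  have hMain : 2 * y₁ * (Real.exp R + Real.exp (-R)) =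
      Real.exp d * (β - (β - 2) * c + 2 * x₁ * s) +
      Real.exp (-d) * (β + (β - 2) * c - 2 * x₁ * s) := by
    linear_combination 2 * hKey
  set D : ℝ := β - (β - 2) * c + 2 * x₁ * s with hD_def
  set E : ℝ := β + (β - 2) * c - 2 * x₁ * s with hE_def
  clear_value D E
  -- positivity facts about D and E
  have hβ1 : (1:ℝ) ≤ β := by rw [hβ]; exact aux_beta x₁ y₁
  have hidD : 2 * β * D = D ^ 2 + ((β - 2) * s + 2 * x₁ * c) ^ 2 + 4 * y₁ ^ 2 := by
    rw [hD_def]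
    linear_combination 4 * hβ - ((β - 2) ^ 2 + 4 * x₁ ^ 2) * hs2
  have hidE : 2 * β * E = E ^ 2 + ((β - 2) * s + 2 * x₁ * c) ^ 2 + 4 * y₁ ^ 2 := by
    rw [hE_def]
    linear_combination 4 * hβ - ((β - 2) ^ 2 + 4 * x₁ ^ 2) * hs2
  have hDpos : 0 < D := aux_Dpos β y₁ D _ hy₁ hβ1 hidD
  have hDβ : 2 * y₁ ^ 2 ≤ β * D := aux_Dlb β y₁ D _ hidD
  have hEpos : 0 < E := aux_Dpos β y₁ E _ hy₁ hβ1 hidE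
  have hEub : E ≤ 2 * β + 2 * |x₁| := aux_Eub β c s x₁ E hβ1 hc1 hc2 hs1 hs1' hE_def
  -- final bound
  have heR : Real.exp (-R) ≤ 1 := Real.exp_le_one_iff.mpr (by linarith)
  have hed : Real.exp (-d) ≤ 1 := Real.exp_le_one_iff.mpr (by linarith)
  have key2 : Real.exp d * D - 2 * y₁ * Real.exp R =
      2 * y₁ * Real.exp (-R) - Real.exp (-d) * E := by linear_combination -hMain
  have habs1 : |Real.exp d * D - 2 * y₁ * Real.exp R| ≤ 2 * y₁ + (2 * β + 2 * |x₁|) := by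
    rw [key2]
    exact aux_absb (Real.exp (-R)) (Real.exp (-d)) y₁ E (2 * β + 2 * |x₁|)
      (Real.exp_pos _) heR (Real.exp_pos _) hed hEpos.le hEub hy₁
  have hrw : Real.exp d - 2 * y₁ * Real.exp R / D =
      (Real.exp d * D - 2 * y₁ * Real.exp R) / D := by
    field_simp
  rw [hrw, abs_div, abs_of_pos hDpos]
  calc |Real.exp d * D - 2 * y₁ * Real.exp R| / D
      ≤ (2 * y₁ + (2 * β + 2 * |x₁|)) / D := by gcongr
    _ = (2 * y₁ + 2 * β + 2 * |x₁|) / D := by ring_nf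
    _ ≤ (2 * y₁ + 2 * β + 2 * |x₁|) * β / (2 * y₁ ^ 2) :=
        aux_final _ β D y₁ (by positivity) hDpos hy₁ hDβ
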